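/- For every real $T > 0$ and $k \ge 0$, the number of subgroups $H \subseteq \mathbb{Z}^k$ with $[\mathbb{Z}^k : H] \le T$ is at most $T^k$. -/

import Mathlib

open AddSubgroup

private lemma int_index_mem (Z : AddSubgroup ℤ) : ((Z.index : ℤ)) ∈ Z := by
  obtain ⟨a, rfl⟩ := Int.subgroup_cyclic Z
  rw [← AddSubgroup.zmultiples_eq_closure, Int.index_zmultiples]
  rcases Int.natAbs_eq a with h | h
  · rw [← h]; exact AddSubgroup.mem_zmultiples a
  · rw [show ((a.natAbs : ℤ)) = -a by omega]
    exact neg_mem (AddSubgroup.mem_zmultiples a)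

private lemma int_index_dvd (Z : AddSubgroup ℤ) {n : ℤ} (hn : n ∈ Z) : ((Z.index : ℤ)) ∣ n := by
  obtain ⟨a, rfl⟩ := Int.subgroup_cyclic Z
  rw [← AddSubgroup.zmultiples_eq_closure] at hn ⊢
  rw [Int.index_zmultiples, Int.natAbs_dvd]
  obtain ⟨k, hk⟩ := AddSubgroup.mem_zmultiples_iff.mp hn
  exact ⟨k, by rw [← hk, smul_eq_mul, mul_comm]⟩

variable {A : Type} [AddCommGroup A]

private lemma index_mul (H : AddSubgroup (ℤ × A)) :
    (H.map (AddMonoidHom.fst ℤ A)).index * (H.comap (AddMonoidHom.inr ℤ A)).index = H.index := by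
  have hker : (AddMonoidHom.inr ℤ A).range = (AddMonoidHom.fst ℤ A).ker := by
    ext ⟨n, a⟩
    simp [AddMonoidHom.mem_ker, AddSubgroup.mem_prod, Prod.ext_iff, eq_comm]
  have h1 : (H.map (AddMonoidHom.fst ℤ A)).index = (H ⊔ (AddMonoidHom.fst ℤ A).ker).index := by
    rw [AddSubgroup.index_map, AddMonoidHom.range_eq_top.2 Prod.fst_surjective,
      AddSubgroup.index_top, mul_one]
  have h2 : (H.comap (AddMonoidHom.inr ℤ A)).index
      = H.relIndex (H ⊔ (AddMonoidHom.fst ℤ A).ker) := by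
    rw [AddSubgroup.index_comap, hker, ← AddSubgroup.relIndex_sup_right, sup_comm]
  rw [h1, h2, mul_comm]
  exact AddSubgroup.relIndex_mul_index le_sup_left

private lemma pick_exists (H : AddSubgroup (ℤ × A)) :
    ∃ a, (((H.map (AddMonoidHom.fst ℤ A)).index : ℤ), a) ∈ H := by
  have h := int_index_mem (H.map (AddMonoidHom.fst ℤ A))
  rw [AddSubgroup.mem_map] at h
  obtain ⟨⟨n, a⟩, hx, hfst⟩ := h
  simp only [AddMonoidHom.coe_fst] at hfst
  exact ⟨a, by rw [← hfst]; exact hx⟩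

private noncomputable def pick (H : AddSubgroup (ℤ × A)) : A := (pick_exists H).choose

private lemma pick_mem (H : AddSubgroup (ℤ × A)) :
    (((H.map (AddMonoidHom.fst ℤ A)).index : ℤ), pick H) ∈ H := (pick_exists H).choose_spec

private lemma le_of_data {H₁ H₂ : AddSubgroup (ℤ × A)}
    (hc : H₁.comap (AddMonoidHom.inr ℤ A) = H₂.comap (AddMonoidHom.inr ℤ A))
    (hd : (H₁.map (AddMonoidHom.fst ℤ A)).index = (H₂.map (AddMonoidHom.fst ℤ A)).index)
    (hcl : pick H₂ - pick H₁ ∈ H₁.comap (AddMonoidHom.inr ℤ A)) :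
    H₁ ≤ H₂ := by
  rintro ⟨n, a⟩ hx
  set d : ℕ := (H₁.map (AddMonoidHom.fst ℤ A)).index with hdd
  have hdn : (d : ℤ) ∣ n := int_index_dvd _ (AddSubgroup.mem_map.mpr ⟨(n, a), hx, rfl⟩)
  obtain ⟨q, hq⟩ := hdn
  have hm₁ : ((d : ℤ), pick H₁) ∈ H₁ := pick_mem H₁
  have hm₂ : ((d : ℤ), pick H₂) ∈ H₂ := by
    have := pick_mem H₂; rwa [← hd] at this
  have h0 : ((0 : ℤ), a - q • pick H₁) ∈ H₁ := by
    have hsub : ((n, a) - q • ((d : ℤ), pick H₁)) ∈ H₁ := sub_mem hx (zsmul_mem hm₁ q)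
    have heq : ((n, a) - q • ((d : ℤ), pick H₁)) = ((0 : ℤ), a - q • pick H₁) := by
      rw [Prod.smul_mk, Prod.mk_sub_mk, Prod.mk.injEq]
      exact ⟨by rw [hq, smul_eq_mul]; ring, rfl⟩
    rwa [heq] at hsub
  have h0' : ((0 : ℤ), a - q • pick H₁) ∈ H₂ := by
    have : a - q • pick H₁ ∈ H₁.comap (AddMonoidHom.inr ℤ A) := by
      simpa [AddSubgroup.mem_comap] using h0
    rw [hc] at this
    simpa [AddSubgroup.mem_comap] using this
  have h2 : ((0 : ℤ), pick H₂ - pick H₁) ∈ H₂ := by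
    rw [hc] at hcl
    simpa [AddSubgroup.mem_comap] using hcl
  have key : ((n : ℤ), a) = q • ((d : ℤ), pick H₂) - q • ((0 : ℤ), pick H₂ - pick H₁)
      + ((0 : ℤ), a - q • pick H₁) := by
    rw [Prod.smul_mk, Prod.smul_mk, Prod.mk_sub_mk, Prod.mk_add_mk, Prod.mk.injEq]
    constructor
    · rw [hq, smul_eq_mul, smul_eq_mul]; ring
    · rw [smul_sub]; abel
  rw [key]
  exact add_mem (sub_mem (zsmul_mem hm₂ q) (zsmul_mem h2 q)) h0'

private lemma fiber_bound {T : ℝ} (hT : 0 < T) (K : AddSubgroup A) (hK : 0 < K.index) :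
    {H : AddSubgroup (ℤ × A) | (0 < H.index ∧ (H.index : ℝ) ≤ T)
        ∧ H.comap (AddMonoidHom.inr ℤ A) = K}.Finite ∧
      {H : AddSubgroup (ℤ × A) | (0 < H.index ∧ (H.index : ℝ) ≤ T)
        ∧ H.comap (AddMonoidHom.inr ℤ A) = K}.ncard ≤ ⌊T⌋₊ := by
  set m : ℕ := K.index with hm
  set D : ℕ := ⌊T / m⌋₊ with hD
  have hmR : (0 : ℝ) < m := by exact_mod_cast hK
  haveI : Finite (A ⧸ K) := by
    apply Nat.finite_of_card_ne_zero
    rw [← AddSubgroup.index_eq_card]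
    exact hK.ne'
  set F : Set (AddSubgroup (ℤ × A)) :=
    {H | (0 < H.index ∧ (H.index : ℝ) ≤ T) ∧ H.comap (AddMonoidHom.inr ℤ A) = K} with hF
  set tgt : Set (ℕ × (A ⧸ K)) := Set.Icc 1 D ×ˢ Set.univ with htgtdef
  have htgt : tgt.Finite := (Set.finite_Icc _ _).prod Set.finite_univ
  set g : AddSubgroup (ℤ × A) → ℕ × (A ⧸ K) :=
    fun H => ((H.map (AddMonoidHom.fst ℤ A)).index, QuotientAddGroup.mk (pick H)) with hg
  have hmaps : ∀ H ∈ F, g H ∈ tgt := by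
    rintro H ⟨⟨hpos, hle⟩, hcom⟩
    have hmul := index_mul H
    rw [hcom, ← hm] at hmul
    refine ⟨Set.mem_Icc.2 ⟨?_, ?_⟩, Set.mem_univ _⟩
    · rcases Nat.eq_zero_or_pos (H.map (AddMonoidHom.fst ℤ A)).index with h | h
      · rw [h, zero_mul] at hmul; omega
      · exact h
    · apply Nat.le_floor
      rw [le_div_iff₀ hmR]
      calc ((H.map (AddMonoidHom.fst ℤ A)).index : ℝ) * m
          = ((H.map (AddMonoidHom.fst ℤ A)).index * m : ℕ) := by push_cast; ring
        _ = (H.index : ℝ) := by rw [hmul]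
        _ ≤ T := hle
  have hinj : Set.InjOn g F := by
    rintro H₁ ⟨_, h₁⟩ H₂ ⟨_, h₂⟩ hgeq
    rw [hg, Prod.mk.injEq] at hgeq
    obtain ⟨hgd, hgc⟩ := hgeq
    have hcc : H₁.comap (AddMonoidHom.inr ℤ A) = H₂.comap (AddMonoidHom.inr ℤ A) :=
      h₁.trans h₂.symm
    have hsub : pick H₂ - pick H₁ ∈ K := by
      rw [sub_eq_neg_add]
      exact (QuotientAddGroup.eq).1 hgc
    refine le_antisymm (le_of_data hcc hgd ?_) (le_of_data hcc.symm hgd.symm ?_)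
    · rw [h₁]; exact hsub
    · rw [h₂]; simpa using neg_mem hsub
  have hFfin : F.Finite := by
    apply Set.Finite.of_finite_image (htgt.subset (Set.image_subset_iff.2 hmaps)) hinj
  have htgtcard : tgt.ncard = D * m := by
    have e1 : tgt ≃ (Set.Icc 1 D : Set ℕ) × (Set.univ : Set (A ⧸ K)) := Equiv.Set.prod _ _
    rw [← Nat.card_coe_set_eq, Nat.card_congr e1, Nat.card_prod,
      Nat.card_coe_set_eq, Nat.card_coe_set_eq, Set.ncard_univ,
      ← Finset.coe_Icc, Set.ncard_coe_finset, Nat.card_Icc, ← AddSubgroup.index_eq_card, ← hm]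
    simp
  have hcard : F.ncard ≤ ⌊T⌋₊ := by
    refine le_trans (le_trans (Set.ncard_le_ncard_of_injOn g hmaps hinj htgt) htgtcard.le) ?_
    apply Nat.le_floor
    have h1 : (D : ℝ) ≤ T / m := Nat.floor_le (by positivity)
    calc ((D * m : ℕ) : ℝ) = (D : ℝ) * m := by push_cast; ring
      _ ≤ (T / m) * m := by gcongr
      _ = T := div_mul_cancel₀ T hmR.ne'
  exact ⟨hFfin, hcard⟩

private lemma step {T : ℝ} (hT : 0 < T)
    (hfin : {K : AddSubgroup A | 0 < K.index ∧ (K.index : ℝ) ≤ T}.Finite) :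
    {H : AddSubgroup (ℤ × A) | 0 < H.index ∧ (H.index : ℝ) ≤ T}.Finite ∧
      ({H : AddSubgroup (ℤ × A) | 0 < H.index ∧ (H.index : ℝ) ≤ T}.ncard : ℝ) ≤
        T * {K : AddSubgroup A | 0 < K.index ∧ (K.index : ℝ) ≤ T}.ncard := by
  classical
  set S₀ := {K : AddSubgroup A | 0 < K.index ∧ (K.index : ℝ) ≤ T} with hS₀
  set S₁ := {H : AddSubgroup (ℤ × A) | 0 < H.index ∧ (H.index : ℝ) ≤ T} with hS₁
  have hmem : ∀ H ∈ S₁, H.comap (AddMonoidHom.inr ℤ A) ∈ S₀ := by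
    rintro H ⟨hpos, hle⟩
    have hmul := index_mul H
    have hKpos : 0 < (H.comap (AddMonoidHom.inr ℤ A)).index := by
      rcases Nat.eq_zero_or_pos (H.comap (AddMonoidHom.inr ℤ A)).index with h | h
      · rw [h, mul_zero] at hmul; omega
      · exact h
    refine ⟨hKpos, le_trans ?_ hle⟩
    have : (H.comap (AddMonoidHom.inr ℤ A)).index ≤ H.index :=
      Nat.le_of_dvd hpos (Dvd.intro_left _ hmul)
    exact_mod_cast this
  have hcover : S₁ ⊆ ⋃ K ∈ hfin.toFinset,
      {H : AddSubgroup (ℤ × A) | (0 < H.index ∧ (H.index : ℝ) ≤ T)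
        ∧ H.comap (AddMonoidHom.inr ℤ A) = K} := by
    intro H hH
    exact Set.mem_biUnion ((Set.Finite.mem_toFinset _).2 (hmem H hH)) ⟨hH, rfl⟩
  have hfin₁ : S₁.Finite := by
    refine Set.Finite.subset (Set.Finite.biUnion (hfin.toFinset.finite_toSet) ?_) hcover
    intro K hK
    exact (fiber_bound hT K ((hfin.mem_toFinset.1 hK).1)).1
  refine ⟨hfin₁, ?_⟩
  set s₁ := hfin₁.toFinset with hs₁
  set f : AddSubgroup (ℤ × A) → AddSubgroup A := fun H => H.comap (AddMonoidHom.inr ℤ A) with hf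
  have hcard : s₁.card ≤ ⌊T⌋₊ * (s₁.image f).card := by
    apply Finset.card_le_mul_card_image
    intro K hK
    obtain ⟨H₀, hH₀, hH₀K⟩ := Finset.mem_image.1 hK
    have hKS₀ : K ∈ S₀ := hH₀K ▸ hmem H₀ (hfin₁.mem_toFinset.1 hH₀)
    have hfil : ((s₁.filter (fun H => f H = K)) : Set (AddSubgroup (ℤ × A)))
        = {H : AddSubgroup (ℤ × A) | (0 < H.index ∧ (H.index : ℝ) ≤ T)
            ∧ H.comap (AddMonoidHom.inr ℤ A) = K} := by
      ext H
      simp only [Finset.coe_filter, Set.mem_setOf_eq, hfin₁.mem_toFinset, hs₁]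
      exact Iff.rfl
    have := (fiber_bound hT K hKS₀.1).2
    rw [← hfil, Set.ncard_coe_finset] at this
    exact this
  have himg : (s₁.image f).card ≤ hfin.toFinset.card := by
    apply Finset.card_le_card
    intro K hK
    obtain ⟨H₀, hH₀, hH₀K⟩ := Finset.mem_image.1 hK
    exact hfin.mem_toFinset.2 (hH₀K ▸ hmem H₀ (hfin₁.mem_toFinset.1 hH₀))
  have h1 : S₁.ncard = s₁.card := by rw [hs₁, ← Set.ncard_coe_finset, hfin₁.coe_toFinset]
  have h0 : S₀.ncard = hfin.toFinset.card := by rw [← Set.ncard_coe_finset, hfin.coe_toFinset]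
  rw [h1, h0]
  calc (s₁.card : ℝ) ≤ (⌊T⌋₊ * (s₁.image f).card : ℕ) := by exact_mod_cast hcard
    _ ≤ (⌊T⌋₊ * hfin.toFinset.card : ℕ) := by
        have := Nat.mul_le_mul_left ⌊T⌋₊ himg; exact_mod_cast this
    _ = (⌊T⌋₊ : ℝ) * hfin.toFinset.card := by push_cast; ring
    _ ≤ T * hfin.toFinset.card := by
        gcongr
        exact Nat.floor_le hT.le

private def zEquiv (k : ℕ) : (Fin (k + 1) → ℤ) ≃+ ℤ × (Fin k → ℤ) where
  toFun x := (x 0, fun i => x i.succ)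
  invFun p := Fin.cons p.1 p.2
  left_inv x := by
    funext i
    refine Fin.cases ?_ ?_ i <;> simp
  right_inv p := by
    refine Prod.ext ?_ ?_ <;> simp
  map_add' x y := rfl

private lemma transfer {G G' : Type} [AddCommGroup G] [AddCommGroup G'] (e : G ≃+ G') (T : ℝ) :
    {H : AddSubgroup G | 0 < H.index ∧ (H.index : ℝ) ≤ T} =
      (fun K => K.comap e.toAddMonoidHom) ''
        {K : AddSubgroup G' | 0 < K.index ∧ (K.index : ℝ) ≤ T} := by
  have hind : ∀ K : AddSubgroup G', (K.comap e.toAddMonoidHom).index = K.index := fun K =>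
    K.index_comap_of_surjective e.surjective
  ext H
  constructor
  · rintro ⟨h1, h2⟩
    refine ⟨H.comap e.symm.toAddMonoidHom, ⟨?_, ?_⟩, ?_⟩
    · rwa [H.index_comap_of_surjective e.symm.surjective]
    · rwa [H.index_comap_of_surjective e.symm.surjective]
    · show (H.comap e.symm.toAddMonoidHom).comap e.toAddMonoidHom = H
      rw [AddSubgroup.comap_comap]
      convert AddSubgroup.comap_id H using 2
      ext x; simp
  · rintro ⟨K, ⟨h1, h2⟩, rfl⟩
    exact ⟨by rwa [hind], by rwa [hind]⟩

private lemma comap_inj {G G' : Type} [AddCommGroup G] [AddCommGroup G'] (e : G ≃+ G') :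
    Function.Injective (fun K : AddSubgroup G' => K.comap e.toAddMonoidHom) := by
  intro K₁ K₂ h
  have : ∀ K : AddSubgroup G', (K.comap e.toAddMonoidHom).comap e.symm.toAddMonoidHom = K := by
    intro K
    rw [AddSubgroup.comap_comap]
    convert AddSubgroup.comap_id K using 2
    ext x; simp
  have h' : K₁.comap e.toAddMonoidHom = K₂.comap e.toAddMonoidHom := h
  rw [← this K₁, ← this K₂, h']

/-- For every real `T > 0` and every `k ≥ 0`, the number of finite-index subgroups
`H ⊆ ℤ^k` with `[ℤ^k : H] ≤ T` is at most `T^k`. -/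
theorem stmt2 (k : ℕ) (T : ℝ) (hT : 0 < T) :
    ({H : AddSubgroup (Fin k → ℤ) | 0 < H.index ∧ (H.index : ℝ) ≤ T}.ncard : ℝ) ≤ T ^ k := by
  have key : ∀ k : ℕ,
      {H : AddSubgroup (Fin k → ℤ) | 0 < H.index ∧ (H.index : ℝ) ≤ T}.Finite ∧
        ({H : AddSubgroup (Fin k → ℤ) | 0 < H.index ∧ (H.index : ℝ) ≤ T}.ncard : ℝ) ≤ T ^ k := by
    intro k
    induction k with
    | zero =>
      have hsub : {H : AddSubgroup (Fin 0 → ℤ) | 0 < H.index ∧ (H.index : ℝ) ≤ T} ⊆ {⊤} := by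
        intro H _
        have hx : ∀ x : Fin 0 → ℤ, x = 0 := fun x => funext fun i => i.elim0
        have hH : H = ⊤ := by
          ext x
          simpa [hx x] using zero_mem H
        exact Set.mem_singleton_iff.2 hH
      refine ⟨(Set.finite_singleton _).subset hsub, ?_⟩
      have h1 := Set.ncard_le_ncard hsub (Set.finite_singleton _)
      rw [Set.ncard_singleton] at h1
      have h2 : ({H : AddSubgroup (Fin 0 → ℤ) | 0 < H.index ∧ (H.index : ℝ) ≤ T}.ncard : ℝ) ≤ 1 := by
        exact_mod_cast h1
      simpa using h2
    | succ n ih =>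
      have hst := step (A := Fin n → ℤ) hT ih.1
      have htr := transfer (zEquiv n) T
      have hinj := comap_inj (zEquiv n)
      constructor
      · rw [htr]; exact hst.1.image _
      · rw [htr, Set.ncard_image_of_injective _ hinj]
        calc ({H : AddSubgroup (ℤ × (Fin n → ℤ)) | 0 < H.index ∧ (H.index : ℝ) ≤ T}.ncard : ℝ)
            ≤ T * {K : AddSubgroup (Fin n → ℤ) | 0 < K.index ∧ (K.index : ℝ) ≤ T}.ncard := hst.2
          _ ≤ T * T ^ n := by gcongr; exact ih.2
          _ = T ^ (n + 1) := by ring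
  exact (key k).2
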